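/- Let ξ : ℝ³ → ℝ be three times continuously differentiable. Then for every x, v ∈ ℝ³, the derivative at s = 0 of the function s ↦ α(x + s v, v) equals −2 ξ(x) · D³ξ(x)[v,v,v]. -/

import Mathlib

noncomputable section

open Real

/-- Euclidean 3-space. -/
abbrev E3 : Type := EuclideanSpace ℝ (Fin 3)

/-- Kinetic distance toward the grazing set:
`α(x,v) = (∇ξ(x)·v)² − 2 (D²ξ(x)[v,v]) ξ(x)`. -/
def kineticAlpha (ξ : E3 → ℝ) (x v : E3) : ℝ :=
  (fderiv ℝ ξ x v) ^ 2 - 2 * (iteratedFDeriv ℝ 2 ξ x ![v, v]) * ξ x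

lemma line_hasDerivAt (x v : E3) : HasDerivAt (fun s : ℝ => x + s • v) v 0 := by
  simpa using ((hasDerivAt_id (0:ℝ)).smul_const v).const_add x

lemma aux_iter (ξ : E3 → ℝ) {n : ℕ} (hξ : ContDiff ℝ (n+1) ξ) (x v : E3) (m : Fin n → E3) :
    HasDerivAt (fun s : ℝ => iteratedFDeriv ℝ n ξ (x + s • v) m)
      (iteratedFDeriv ℝ (n+1) ξ x (Fin.cons v m)) 0 := by
  have hd : DifferentiableAt ℝ (iteratedFDeriv ℝ n ξ) x :=
    (hξ.differentiable_iteratedFDeriv (by exact_mod_cast lt_add_one n)) x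
  have h1 : HasDerivAt (fun s : ℝ => iteratedFDeriv ℝ n ξ (x + s • v))
      (fderiv ℝ (iteratedFDeriv ℝ n ξ) x v) 0 := by
    have hd' : HasFDerivAt (iteratedFDeriv ℝ n ξ) (fderiv ℝ (iteratedFDeriv ℝ n ξ) x)
        (x + (0:ℝ) • v) := by simpa using hd.hasFDerivAt
    have := hd'.comp_hasDerivAt 0 (line_hasDerivAt x v)
    simpa [Function.comp_def] using this
  have h2 := ((ContinuousMultilinearMap.apply ℝ (fun _ : Fin n => E3) ℝ m).hasFDerivAt).comp_hasDerivAt 0 h1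
  simpa [iteratedFDeriv_succ_apply_left, Function.comp_def] using h2

/-- The exact cancellation identity `v·∇ₓα = −2 ξ(x) D³ξ(x)[v,v,v]`:
the derivative at `s = 0` of `s ↦ α(x + s v, v)`. -/
theorem kineticAlpha_transport_deriv
    (ξ : E3 → ℝ) (hξ : ContDiff ℝ 3 ξ) (x v : E3) :
    HasDerivAt (fun s : ℝ => kineticAlpha ξ (x + s • v) v)
      (-2 * ξ x * iteratedFDeriv ℝ 3 ξ x ![v, v, v]) 0 := by
  have hξ2 : ContDiff ℝ 2 ξ := hξ.of_le (by norm_num)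
  have hξ1 : ContDiff ℝ 1 ξ := hξ.of_le (by norm_num)
  -- C : s ↦ ξ(x+sv)
  have hC : HasDerivAt (fun s : ℝ => ξ (x + s • v)) (fderiv ℝ ξ x v) 0 := by
    have hd' : HasFDerivAt ξ (fderiv ℝ ξ x) (x + (0:ℝ) • v) := by
      simpa using ((hξ1.differentiable one_ne_zero) x).hasFDerivAt
    have := hd'.comp_hasDerivAt 0 (line_hasDerivAt x v)
    simpa [Function.comp_def] using this
  -- A : s ↦ ∇ξ(x+sv)·v
  have hA : HasDerivAt (fun s : ℝ => fderiv ℝ ξ (x + s • v) v)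
      (iteratedFDeriv ℝ 2 ξ x ![v, v]) 0 := by
    have h := aux_iter ξ (n := 1) hξ2 x v ![v]
    have hcons : (Fin.cons v ![v] : Fin 2 → E3) = ![v, v] := by
      ext i
      fin_cases i <;> rfl
    rw [hcons] at h
    have : (fun s : ℝ => iteratedFDeriv ℝ 1 ξ (x + s • v) ![v])
        = fun s : ℝ => fderiv ℝ ξ (x + s • v) v := by
      funext s; simp [iteratedFDeriv_one_apply]
    rwa [this] at h
  -- B : s ↦ D²ξ(x+sv)[v,v]
  have hB : HasDerivAt (fun s : ℝ => iteratedFDeriv ℝ 2 ξ (x + s • v) ![v, v])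
      (iteratedFDeriv ℝ 3 ξ x ![v, v, v]) 0 := by
    have h := aux_iter ξ (n := 2) (by exact_mod_cast hξ) x v ![v, v]
    have hcons : (Fin.cons v ![v, v] : Fin 3 → E3) = ![v, v, v] := by
      ext i
      fin_cases i <;> rfl
    rwa [hcons] at h
  have hcomb := (hA.pow 2).sub ((hB.const_mul 2).mul hC)
  have h0 : (fun s : ℝ => kineticAlpha ξ (x + s • v) v)
      = fun s : ℝ => (fderiv ℝ ξ (x + s • v) v) ^ 2
        - 2 * (iteratedFDeriv ℝ 2 ξ (x + s • v) ![v, v]) * ξ (x + s • v) := by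
    funext s; rfl
  rw [h0]
  have hval : (fun s : ℝ => fderiv ℝ ξ (x + s • v) v) 0 = fderiv ℝ ξ x v := by simp
  have hval2 : (fun s : ℝ => iteratedFDeriv ℝ 2 ξ (x + s • v) ![v, v]) 0
      = iteratedFDeriv ℝ 2 ξ x ![v, v] := by simp
  have hval3 : (fun s : ℝ => ξ (x + s • v)) 0 = ξ x := by simp
  convert hcomb using 1
  · rfl
  · rfl
  · rfl
  simp only [hval, hval2, hval3, zero_smul, add_zero]
  ring
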